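/- arXiv:1609.06212 — 3 statements merged into one kernel-verified Lean document; each statement's English description precedes it below -/
import Mathlib

section
/- Let f : ℝ → ℝ be Lebesgue integrable, let a < b be real numbers, let j be a nonnegative integer and θ ∈ (0, 1]. Suppose f restricted to the open interval (a, b) is j times continuously differentiable and its j-th derivative on (a, b) is θ-Hölder continuous (i.e. there is C ≥ 0 with |f^{(j)}(x₁) − f^{(j)}(x₂)| ≤ C·|x₁ − x₂|^θ for all x₁, x₂ ∈ (a, b)). Then the convolution v(x) = ∫ (1/2)·exp(−|x − y|)·f(y) dy is (j+1) times continuously differentiable on (a, b) and its (j+1)-th derivative is θ-Hölder continuous on (a, b). -/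
open MeasureTheory

namespace Stmt16Aux

noncomputable def A (f : ℝ → ℝ) (x : ℝ) : ℝ := ∫ y in Set.Iic x, Real.exp y * f y
noncomputable def B (f : ℝ → ℝ) (x : ℝ) : ℝ := ∫ y in Set.Ioi x, Real.exp (-y) * f y
/-- candidate derivative of the convolution -/
noncomputable def w (f : ℝ → ℝ) (x : ℝ) : ℝ :=
  (1 / 2) * (-(Real.exp (-x) * A f x) + Real.exp x * B f x)

variable {f : ℝ → ℝ}

lemma measA (hf : Integrable f volume) :
    AEStronglyMeasurable (fun y => Real.exp y * f y) volume :=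
  Real.continuous_exp.aestronglyMeasurable.mul hf.1

lemma measB (hf : Integrable f volume) :
    AEStronglyMeasurable (fun y => Real.exp (-y) * f y) volume :=
  (Real.continuous_exp.comp continuous_neg).aestronglyMeasurable.mul hf.1

lemma intA (hf : Integrable f volume) (x : ℝ) :
    IntegrableOn (fun y => Real.exp y * f y) (Set.Iic x) volume := by
  refine Integrable.mono' ((hf.norm.const_mul (Real.exp x)).restrict)
    ((measA hf).restrict) ?_
  refine (ae_restrict_iff' measurableSet_Iic).2 (Filter.Eventually.of_forall fun y hy => ?_)
  rw [norm_mul, Real.norm_eq_abs, abs_of_pos (Real.exp_pos y)]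
  exact mul_le_mul_of_nonneg_right (Real.exp_le_exp.2 hy) (norm_nonneg _)

lemma intB (hf : Integrable f volume) (x : ℝ) :
    IntegrableOn (fun y => Real.exp (-y) * f y) (Set.Ioi x) volume := by
  refine Integrable.mono' ((hf.norm.const_mul (Real.exp (-x))).restrict)
    ((measB hf).restrict) ?_
  refine (ae_restrict_iff' measurableSet_Ioi).2 (Filter.Eventually.of_forall fun y hy => ?_)
  rw [norm_mul, Real.norm_eq_abs, abs_of_pos (Real.exp_pos (-y))]
  exact mul_le_mul_of_nonneg_right (Real.exp_le_exp.2 (by simpa using hy.le)) (norm_nonneg _)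

lemma intervalIntA (hf : Integrable f volume) (c d : ℝ) :
    IntervalIntegrable (fun y => Real.exp y * f y) volume c d := by
  rw [intervalIntegrable_iff]
  exact (intA hf (max c d)).mono_set fun y hy => hy.2

lemma intervalIntB (hf : Integrable f volume) (c d : ℝ) :
    IntervalIntegrable (fun y => Real.exp (-y) * f y) volume c d := by
  rw [intervalIntegrable_iff]
  exact (intB hf (min c d - 1)).mono_set fun y hy => lt_of_lt_of_le (by linarith) hy.1.le

lemma A_eq (hf : Integrable f volume) (c u : ℝ) :
    A f u = A f c + ∫ t in c..u, Real.exp t * f t := by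
  rw [← intervalIntegral.integral_Iic_sub_Iic (intA hf c) (intA hf u)]
  unfold A; ring

lemma B_sub (hf : Integrable f volume) {c u : ℝ} (h : c ≤ u) :
    B f c - B f u = ∫ t in c..u, Real.exp (-t) * f t := by
  rw [intervalIntegral.integral_of_le h]
  have hsplit : (∫ y in Set.Ioc c u, Real.exp (-y) * f y) + B f u = B f c := by
    unfold B
    rw [← setIntegral_union (Set.Ioc_disjoint_Ioi le_rfl) measurableSet_Ioi
      ((intB hf c).mono_set Set.Ioc_subset_Ioi_self) (intB hf u),
      Set.Ioc_union_Ioi_eq_Ioi h]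
  linarith

lemma B_eq (hf : Integrable f volume) (c u : ℝ) :
    B f u = B f c - ∫ t in c..u, Real.exp (-t) * f t := by
  rcases le_total c u with h | h
  · have := B_sub hf h; linarith
  · have := B_sub hf h
    rw [intervalIntegral.integral_symm]
    linarith

lemma hasDerivAt_A (hf : Integrable f volume) {x : ℝ} (hc : ContinuousAt f x) :
    HasDerivAt (A f) (Real.exp x * f x) x := by
  have h : A f = fun u => A f x + ∫ t in x..u, Real.exp t * f t := funext fun u => A_eq hf x u
  rw [h]
  exact (intervalIntegral.integral_hasDerivAt_right (intervalIntA hf x x)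
    (measA hf).stronglyMeasurableAtFilter
    (Real.continuous_exp.continuousAt.mul hc)).const_add _

lemma hasDerivAt_B (hf : Integrable f volume) {x : ℝ} (hc : ContinuousAt f x) :
    HasDerivAt (B f) (-(Real.exp (-x) * f x)) x := by
  have h : B f = fun u => B f x - ∫ t in x..u, Real.exp (-t) * f t := funext fun u => B_eq hf x u
  rw [h]
  exact (intervalIntegral.integral_hasDerivAt_right (intervalIntB hf x x)
    (measB hf).stronglyMeasurableAtFilter
    ((Real.continuous_exp.comp continuous_neg).continuousAt.mul hc)).const_sub _

lemma int_kernel (hf : Integrable f volume) (x : ℝ) :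
    Integrable (fun y => 1 / 2 * Real.exp (-|x - y|) * f y) volume := by
  refine Integrable.mono' (hf.norm.const_mul (1 / 2))
    ((continuous_const.mul (Real.continuous_exp.comp
      (continuous_abs.comp (continuous_const.sub continuous_id)).neg)).aestronglyMeasurable.mul
      hf.1) (Filter.Eventually.of_forall fun y => ?_)
  rw [norm_mul, norm_mul]
  have h1 : Real.exp (-|x - y|) ≤ 1 := Real.exp_le_one_iff.2 (neg_nonpos.2 (abs_nonneg _))
  have h2 : ‖Real.exp (-|x - y|)‖ ≤ 1 := by
    rwa [Real.norm_eq_abs, abs_of_pos (Real.exp_pos _)]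
  calc ‖(1:ℝ) / 2‖ * ‖Real.exp (-|x - y|)‖ * ‖f y‖
      ≤ ‖(1:ℝ) / 2‖ * 1 * ‖f y‖ := by
        refine mul_le_mul_of_nonneg_right (mul_le_mul_of_nonneg_left h2 (norm_nonneg _))
          (norm_nonneg _)
    _ = 1 / 2 * ‖f y‖ := by norm_num

lemma v_eq (hf : Integrable f volume) (x : ℝ) :
    (∫ y, 1 / 2 * Real.exp (-|x - y|) * f y) =
      1 / 2 * (Real.exp (-x) * A f x + Real.exp x * B f x) := by
  rw [← intervalIntegral.integral_Iic_add_Ioi (b := x) (int_kernel hf x).integrableOn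
    (int_kernel hf x).integrableOn]
  have h1 : (∫ y in Set.Iic x, 1 / 2 * Real.exp (-|x - y|) * f y) =
      1 / 2 * (Real.exp (-x) * A f x) := by
    unfold A
    rw [← integral_const_mul, ← integral_const_mul]
    refine setIntegral_congr_fun measurableSet_Iic fun y hy => ?_
    have : |x - y| = x - y := abs_of_nonneg (by simp only [Set.mem_Iic] at hy; linarith)
    rw [this, show -(x - y) = -x + y by ring, Real.exp_add]
    ring
  have h2 : (∫ y in Set.Ioi x, 1 / 2 * Real.exp (-|x - y|) * f y) =
      1 / 2 * (Real.exp x * B f x) := by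
    unfold B
    rw [← integral_const_mul, ← integral_const_mul]
    refine setIntegral_congr_fun measurableSet_Ioi fun y hy => ?_
    have : |x - y| = y - x := by
      rw [abs_of_nonpos (by simp only [Set.mem_Ioi] at hy; linarith)]; ring
    rw [this, show -(y - x) = x + -y by ring, Real.exp_add]
    ring
  rw [h1, h2]; ring

lemma exp_mul_exp_neg (x : ℝ) : Real.exp (-x) * Real.exp x = 1 := by
  rw [← Real.exp_add]; simp

lemma hasDerivAt_v (hf : Integrable f volume) {x : ℝ} (hc : ContinuousAt f x)
    (v : ℝ → ℝ) (hv : ∀ x, v x = ∫ y, 1 / 2 * Real.exp (-|x - y|) * f y) :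
    HasDerivAt v (w f x) x := by
  have hveq : v = fun u => 1 / 2 * (Real.exp (-u) * A f u + Real.exp u * B f u) :=
    funext fun u => (hv u).trans (v_eq hf u)
  rw [hveq]
  have hexp : HasDerivAt (fun u : ℝ => Real.exp (-u)) (-Real.exp (-x)) x := by
    have := (Real.hasDerivAt_exp (-x)).comp x (hasDerivAt_neg x)
    simp only [mul_neg, mul_one] at this; exact this
  have h1 : HasDerivAt (fun u => Real.exp (-u) * A f u)
      (-Real.exp (-x) * A f x + Real.exp (-x) * (Real.exp x * f x)) x :=
    hexp.mul (hasDerivAt_A hf hc)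
  have h2 : HasDerivAt (fun u => Real.exp u * B f u)
      (Real.exp x * B f x + Real.exp x * -(Real.exp (-x) * f x)) x :=
    (Real.hasDerivAt_exp x).mul (hasDerivAt_B hf hc)
  have h := (h1.add h2).const_mul (1 / 2 : ℝ)
  refine h.congr_deriv ?_
  have he := exp_mul_exp_neg x
  unfold w
  linear_combination (1/2 : ℝ) * f x * he - (1/2 : ℝ) * f x * he

lemma hasDerivAt_w (hf : Integrable f volume) {x : ℝ} (hc : ContinuousAt f x) :
    HasDerivAt (w f) (1 / 2 * (Real.exp (-x) * A f x + Real.exp x * B f x) - f x) x := by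
  have hexp : HasDerivAt (fun u : ℝ => Real.exp (-u)) (-Real.exp (-x)) x := by
    have := (Real.hasDerivAt_exp (-x)).comp x (hasDerivAt_neg x)
    simp only [mul_neg, mul_one] at this; exact this
  have h1 : HasDerivAt (fun u => Real.exp (-u) * A f u)
      (-Real.exp (-x) * A f x + Real.exp (-x) * (Real.exp x * f x)) x :=
    hexp.mul (hasDerivAt_A hf hc)
  have h2 : HasDerivAt (fun u => Real.exp u * B f u)
      (Real.exp x * B f x + Real.exp x * -(Real.exp (-x) * f x)) x :=
    (Real.hasDerivAt_exp x).mul (hasDerivAt_B hf hc)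
  have h := ((h1.neg.add h2).const_mul (1 / 2 : ℝ))
  have hw : w f = fun u => 1 / 2 * (-(Real.exp (-u) * A f u) + Real.exp u * B f u) := rfl
  rw [hw]
  refine h.congr_deriv ?_
  have he := exp_mul_exp_neg x
  linear_combination -(f x) * he

lemma absA_le (hf : Integrable f volume) (x : ℝ) :
    |A f x| ≤ Real.exp x * ∫ y, |f y| := by
  have h1 : |A f x| ≤ ∫ y in Set.Iic x, ‖Real.exp y * f y‖ := by
    rw [← Real.norm_eq_abs]
    exact norm_integral_le_integral_norm _
  have h2 : (∫ y in Set.Iic x, ‖Real.exp y * f y‖) ≤ ∫ y in Set.Iic x, Real.exp x * |f y| := by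
    refine setIntegral_mono_on (intA hf x).norm ((hf.norm.const_mul _).restrict)
      measurableSet_Iic fun y hy => ?_
    rw [norm_mul, Real.norm_eq_abs, abs_of_pos (Real.exp_pos y), Real.norm_eq_abs]
    exact mul_le_mul_of_nonneg_right (Real.exp_le_exp.2 hy) (abs_nonneg _)
  have h3 : (∫ y in Set.Iic x, Real.exp x * |f y|) ≤ Real.exp x * ∫ y, |f y| := by
    rw [integral_const_mul]
    refine mul_le_mul_of_nonneg_left ?_ (Real.exp_pos x).le
    exact setIntegral_le_integral hf.abs (Filter.Eventually.of_forall fun y => abs_nonneg _)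
  linarith

lemma absB_le (hf : Integrable f volume) (x : ℝ) :
    |B f x| ≤ Real.exp (-x) * ∫ y, |f y| := by
  have h1 : |B f x| ≤ ∫ y in Set.Ioi x, ‖Real.exp (-y) * f y‖ := by
    rw [← Real.norm_eq_abs]
    exact norm_integral_le_integral_norm _
  have h2 : (∫ y in Set.Ioi x, ‖Real.exp (-y) * f y‖) ≤
      ∫ y in Set.Ioi x, Real.exp (-x) * |f y| := by
    refine setIntegral_mono_on (intB hf x).norm ((hf.norm.const_mul _).restrict)
      measurableSet_Ioi fun y hy => ?_
    rw [norm_mul, Real.norm_eq_abs, abs_of_pos (Real.exp_pos (-y)), Real.norm_eq_abs]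
    exact mul_le_mul_of_nonneg_right (Real.exp_le_exp.2 (by simp only [Set.mem_Ioi] at hy; linarith))
      (abs_nonneg _)
  have h3 : (∫ y in Set.Ioi x, Real.exp (-x) * |f y|) ≤ Real.exp (-x) * ∫ y, |f y| := by
    rw [integral_const_mul]
    refine mul_le_mul_of_nonneg_left ?_ (Real.exp_pos (-x)).le
    exact setIntegral_le_integral hf.abs (Filter.Eventually.of_forall fun y => abs_nonneg _)
  linarith

end Stmt16Aux

/-- If `f ∈ L¹(ℝ)` is of class `C^{j,θ}` on `(a,b)` (i.e. `j` times
continuously differentiable there with `θ`-Hölder `j`-th derivative), then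
`v = G ∗ f`, with `G(y) = (1/2)·exp(−|y|)`, is of class `C^{j+1,θ}` on `(a,b)`. -/
theorem stmt_16 (f : ℝ → ℝ) (hf : Integrable f volume)
    (a b : ℝ) (hab : a < b) (j : ℕ) (θ : ℝ) (hθ₀ : 0 < θ) (hθ₁ : θ ≤ 1)
    (hfreg : ContDiffOn ℝ j f (Set.Ioo a b))
    (C : ℝ) (hC : 0 ≤ C)
    (hfhol : ∀ x₁ ∈ Set.Ioo a b, ∀ x₂ ∈ Set.Ioo a b,
      |iteratedDerivWithin j f (Set.Ioo a b) x₁ -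
        iteratedDerivWithin j f (Set.Ioo a b) x₂| ≤ C * |x₁ - x₂| ^ θ)
    (v : ℝ → ℝ) (hv : ∀ x, v x = ∫ y, (1 / 2) * Real.exp (-|x - y|) * f y) :
    ContDiffOn ℝ (j + 1) v (Set.Ioo a b) ∧
    ∃ C' : ℝ, 0 ≤ C' ∧ ∀ x₁ ∈ Set.Ioo a b, ∀ x₂ ∈ Set.Ioo a b,
      |iteratedDerivWithin (j + 1) v (Set.Ioo a b) x₁ -
        iteratedDerivWithin (j + 1) v (Set.Ioo a b) x₂| ≤ C' * |x₁ - x₂| ^ θ := by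
  open Stmt16Aux in
  set s : Set ℝ := Set.Ioo a b with hs_def
  have hs : IsOpen s := isOpen_Ioo
  have hu : UniqueDiffOn ℝ s := hs.uniqueDiffOn
  have hcf : ∀ x ∈ s, ContinuousAt f x := fun x hx =>
    hfreg.continuousOn.continuousAt (hs.mem_nhds hx)
  have hdv : ∀ x ∈ s, HasDerivAt v (Stmt16Aux.w f x) x := fun x hx =>
    Stmt16Aux.hasDerivAt_v hf (hcf x hx) v hv
  have hdw : ∀ x ∈ s, HasDerivAt (Stmt16Aux.w f) (v x - f x) x := by
    intro x hx
    have h := Stmt16Aux.hasDerivAt_w hf (hcf x hx)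
    have h2 : v x - f x =
        1 / 2 * (Real.exp (-x) * Stmt16Aux.A f x + Real.exp x * Stmt16Aux.B f x) - f x := by
      rw [hv x, Stmt16Aux.v_eq hf x]
    rw [h2]; exact h
  have hDv : DifferentiableOn ℝ v s := fun x hx =>
    (hdv x hx).differentiableAt.differentiableWithinAt
  have hDw : DifferentiableOn ℝ (Stmt16Aux.w f) s := fun x hx =>
    (hdw x hx).differentiableAt.differentiableWithinAt
  have hEv : Set.EqOn (derivWithin v s) (Stmt16Aux.w f) s := fun x hx => by
    rw [derivWithin_of_isOpen hs hx]; exact (hdv x hx).deriv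
  have hEw : Set.EqOn (derivWithin (Stmt16Aux.w f) s) (v - f) s := fun x hx => by
    rw [derivWithin_of_isOpen hs hx, (hdw x hx).deriv]; rfl
  have hEv' : Set.EqOn (deriv v) (Stmt16Aux.w f) s := fun x hx => (hdv x hx).deriv
  have hEw' : Set.EqOn (deriv (Stmt16Aux.w f)) (v - f) s := fun x hx => by
    rw [(hdw x hx).deriv]; rfl
  -- smoothness bootstrap
  have hsm : ∀ k : ℕ, k ≤ j + 2 → ContDiffOn ℝ k v s := by
    intro k
    induction k using Nat.strong_induction_on with
    | _ k IH =>
      match k, IH with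
      | 0, _ => exact fun _ => contDiffOn_zero.2 hDv.continuousOn
      | 1, _ =>
        intro _
        rw [show ((1 : ℕ) : WithTop ℕ∞) = 0 + 1 by norm_num]
        refine (contDiffOn_succ_iff_deriv_of_isOpen hs).2 ⟨hDv, by simp, ?_⟩
        exact contDiffOn_zero.2 (hDw.continuousOn.congr hEv')
      | (m + 2), IH =>
        intro hk
        have h1 : ContDiffOn ℝ m v s := IH m (by omega) (by omega)
        have h2 : ContDiffOn ℝ m f s := hfreg.of_le (by exact_mod_cast (by omega : m ≤ j))
        rw [show ((m + 2 : ℕ) : WithTop ℕ∞) = ((m + 1 : ℕ) : WithTop ℕ∞) + 1 by push_cast; ring]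
        refine (contDiffOn_succ_iff_deriv_of_isOpen hs).2 ⟨hDv, by simp, ?_⟩
        refine ContDiffOn.congr ?_ hEv'
        rw [show ((m + 1 : ℕ) : WithTop ℕ∞) = ((m : ℕ) : WithTop ℕ∞) + 1 by push_cast; ring]
        refine (contDiffOn_succ_iff_deriv_of_isOpen hs).2 ⟨hDw, by simp, ?_⟩
        exact (h1.sub h2).congr hEw'
  -- iterated derivative recursion
  have hid : ∀ k : ℕ, k ≤ j → ∀ x ∈ s, iteratedDerivWithin (k + 2) v s x =
      iteratedDerivWithin k v s x - iteratedDerivWithin k f s x := by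
    intro k hk x hx
    rw [show k + 2 = (k + 1) + 1 by ring, iteratedDerivWithin_succ',
      iteratedDerivWithin_congr hEv hx, iteratedDerivWithin_succ',
      iteratedDerivWithin_congr hEw hx,
      iteratedDerivWithin_sub hx hu (hsm k (by omega) x hx)
        (hfreg.of_le (by exact_mod_cast hk) x hx)]
  -- bounds
  set I : ℝ := ∫ y, |f y| with hI_def
  have hI : 0 ≤ I := integral_nonneg fun y => abs_nonneg _
  set x₀ : ℝ := (a + b) / 2 with hx₀_def
  have hx₀ : x₀ ∈ s := ⟨by simp only [hx₀_def]; linarith, by simp only [hx₀_def]; linarith⟩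
  have habs : ∀ x ∈ s, ∀ y ∈ s, |x - y| ≤ b - a := by
    rintro x ⟨hx1, hx2⟩ y ⟨hy1, hy2⟩
    rw [abs_le]; constructor <;> linarith
  have hbastep : ∀ g : ℝ → ℝ, DifferentiableOn ℝ g s → ∀ M : ℝ, 0 ≤ M →
      (∀ x ∈ s, |derivWithin g s x| ≤ M) →
      ∃ M', 0 ≤ M' ∧ ∀ x ∈ s, |g x| ≤ M' := by
    intro g hg M hM hb
    refine ⟨|g x₀| + M * (b - a), add_nonneg (abs_nonneg _) (mul_nonneg hM (by linarith)), fun x hx => ?_⟩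
    have h1 : ‖g x - g x₀‖ ≤ M * ‖x - x₀‖ :=
      (convex_Ioo a b).norm_image_sub_le_of_norm_derivWithin_le hg
        (fun y hy => by rw [Real.norm_eq_abs]; exact hb y hy) hx₀ hx
    rw [Real.norm_eq_abs, Real.norm_eq_abs] at h1
    have h2 : |x - x₀| ≤ b - a := habs x hx x₀ hx₀
    have h3 : |g x| - |g x₀| ≤ |g x - g x₀| := by
      have := abs_sub_abs_le_abs_sub (g x) (g x₀); linarith
    nlinarith
  have hMfj : ∃ M, 0 ≤ M ∧ ∀ x ∈ s, |iteratedDerivWithin j f s x| ≤ M := by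
    refine ⟨|iteratedDerivWithin j f s x₀| + C * (b - a) ^ θ,
      add_nonneg (abs_nonneg _) (mul_nonneg hC (Real.rpow_nonneg (by linarith) θ)), fun x hx => ?_⟩
    have h1 := hfhol x hx x₀ hx₀
    have h2 : |x - x₀| ^ θ ≤ (b - a) ^ θ :=
      Real.rpow_le_rpow (abs_nonneg _) (habs x hx x₀ hx₀) hθ₀.le
    have h3 := abs_sub_abs_le_abs_sub (iteratedDerivWithin j f s x)
      (iteratedDerivWithin j f s x₀)
    nlinarith
  have hMf : ∀ k ≤ j, ∃ M, 0 ≤ M ∧ ∀ x ∈ s, |iteratedDerivWithin k f s x| ≤ M := by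
    have key : ∀ d k : ℕ, k + d = j →
        ∃ M, 0 ≤ M ∧ ∀ x ∈ s, |iteratedDerivWithin k f s x| ≤ M := by
      intro d
      induction d with
      | zero => intro k hk; rw [Nat.add_zero] at hk; subst hk; exact hMfj
      | succ d IH =>
        intro k hk
        obtain ⟨M, hM0, hM⟩ := IH (k + 1) (by omega)
        refine hbastep _ (hfreg.differentiableOn_iteratedDerivWithin
          (by exact_mod_cast (by omega : k < j)) hu) M hM0 fun x hx => ?_
        rw [show derivWithin (iteratedDerivWithin k f s) s x =
          iteratedDerivWithin (k + 1) f s x from (congrFun iteratedDerivWithin_succ x).symm]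
        exact hM x hx
    intro k hk
    exact key (j - k) k (by omega)
  have hv_bound : ∀ x, |v x| ≤ I := by
    intro x
    rw [hv x, Stmt16Aux.v_eq hf x]
    have hA := Stmt16Aux.absA_le hf x
    have hB := Stmt16Aux.absB_le hf x
    have he := Stmt16Aux.exp_mul_exp_neg x
    have e1 := (Real.exp_pos x).le
    have e2 := (Real.exp_pos (-x)).le
    have hA1 : Real.exp (-x) * |Stmt16Aux.A f x| ≤ I := by nlinarith
    have hB1 : Real.exp x * |Stmt16Aux.B f x| ≤ I := by nlinarith
    have h1 : |Real.exp (-x) * Stmt16Aux.A f x| ≤ I := by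
      rwa [abs_mul, abs_of_pos (Real.exp_pos (-x))]
    have h2 : |Real.exp x * Stmt16Aux.B f x| ≤ I := by
      rwa [abs_mul, abs_of_pos (Real.exp_pos x)]
    calc |1 / 2 * (Real.exp (-x) * Stmt16Aux.A f x + Real.exp x * Stmt16Aux.B f x)|
        = 1 / 2 * |Real.exp (-x) * Stmt16Aux.A f x + Real.exp x * Stmt16Aux.B f x| := by
          rw [abs_mul]; norm_num
      _ ≤ 1 / 2 * (|Real.exp (-x) * Stmt16Aux.A f x| + |Real.exp x * Stmt16Aux.B f x|) := by
          have := abs_add_le (Real.exp (-x) * Stmt16Aux.A f x) (Real.exp x * Stmt16Aux.B f x)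
          linarith
      _ ≤ I := by linarith
  have hw_bound : ∀ x, |Stmt16Aux.w f x| ≤ I := by
    intro x
    have hA := Stmt16Aux.absA_le hf x
    have hB := Stmt16Aux.absB_le hf x
    have he := Stmt16Aux.exp_mul_exp_neg x
    have e1 := (Real.exp_pos x).le
    have e2 := (Real.exp_pos (-x)).le
    have hA1 : Real.exp (-x) * |Stmt16Aux.A f x| ≤ I := by nlinarith
    have hB1 : Real.exp x * |Stmt16Aux.B f x| ≤ I := by nlinarith
    have h1 : |-(Real.exp (-x) * Stmt16Aux.A f x)| ≤ I := by
      rwa [abs_neg, abs_mul, abs_of_pos (Real.exp_pos (-x))]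
    have h2 : |Real.exp x * Stmt16Aux.B f x| ≤ I := by
      rwa [abs_mul, abs_of_pos (Real.exp_pos x)]
    show |1 / 2 * (-(Real.exp (-x) * Stmt16Aux.A f x) + Real.exp x * Stmt16Aux.B f x)| ≤ I
    calc |1 / 2 * (-(Real.exp (-x) * Stmt16Aux.A f x) + Real.exp x * Stmt16Aux.B f x)|
        = 1 / 2 * |(-(Real.exp (-x) * Stmt16Aux.A f x)) + Real.exp x * Stmt16Aux.B f x| := by
          rw [abs_mul]; norm_num
      _ ≤ 1 / 2 * (|-(Real.exp (-x) * Stmt16Aux.A f x)| + |Real.exp x * Stmt16Aux.B f x|) := by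
          have := abs_add_le (-(Real.exp (-x) * Stmt16Aux.A f x)) (Real.exp x * Stmt16Aux.B f x)
          linarith
      _ ≤ I := by linarith
  have hMv : ∀ k ≤ j, ∃ M, 0 ≤ M ∧ ∀ x ∈ s, |iteratedDerivWithin k v s x| ≤ M := by
    intro k
    induction k using Nat.strong_induction_on with
    | _ k IH =>
      match k, IH with
      | 0, _ =>
        exact fun _ => ⟨I, hI, fun x hx => by
          rw [iteratedDerivWithin_zero]; exact hv_bound x⟩
      | 1, _ =>
        intro _
        refine ⟨I, hI, fun x hx => ?_⟩
        rw [iteratedDerivWithin_one, hEv hx]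
        exact hw_bound x
      | (m + 2), IH =>
        intro hk
        obtain ⟨M1, hM10, hb1⟩ := IH m (by omega) (by omega)
        obtain ⟨M2, hM20, hb2⟩ := hMf m (by omega)
        refine ⟨M1 + M2, by positivity, fun x hx => ?_⟩
        rw [hid m (by omega) x hx]
        have := abs_sub (iteratedDerivWithin m v s x) (iteratedDerivWithin m f s x)
        have := abs_sub_abs_le_abs_sub (iteratedDerivWithin m v s x)
          (iteratedDerivWithin m f s x)
        calc |iteratedDerivWithin m v s x - iteratedDerivWithin m f s x|
            ≤ |iteratedDerivWithin m v s x| + |iteratedDerivWithin m f s x| := abs_sub _ _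
          _ ≤ M1 + M2 := add_le_add (hb1 x hx) (hb2 x hx)
  -- assemble
  obtain ⟨Mv, hMv0, hMvb⟩ := hMv j le_rfl
  obtain ⟨MF, hMF0, hMFb⟩ := hMfj
  have hgdiff : DifferentiableOn ℝ (iteratedDerivWithin (j + 1) v s) s :=
    (hsm (j + 2) le_rfl).differentiableOn_iteratedDerivWithin
      (by exact_mod_cast (by omega : j + 1 < j + 2)) hu
  have hdg : ∀ x ∈ s, |derivWithin (iteratedDerivWithin (j + 1) v s) s x| ≤ Mv + MF := by
    intro x hx
    rw [show derivWithin (iteratedDerivWithin (j + 1) v s) s x =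
        iteratedDerivWithin (j + 2) v s x from (congrFun iteratedDerivWithin_succ x).symm,
      hid j le_rfl x hx]
    calc |iteratedDerivWithin j v s x - iteratedDerivWithin j f s x|
        ≤ |iteratedDerivWithin j v s x| + |iteratedDerivWithin j f s x| := abs_sub _ _
      _ ≤ Mv + MF := add_le_add (hMvb x hx) (hMFb x hx)
  constructor
  · have := hsm (j + 1) (by omega)
    exact_mod_cast this
  · refine ⟨(Mv + MF) * (b - a) ^ (1 - θ),
      mul_nonneg (by linarith) (Real.rpow_nonneg (by linarith) _), fun x₁ hx₁ x₂ hx₂ => ?_⟩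
    have hlip : |iteratedDerivWithin (j + 1) v s x₁ - iteratedDerivWithin (j + 1) v s x₂| ≤
        (Mv + MF) * |x₁ - x₂| := by
      have h := (convex_Ioo a b).norm_image_sub_le_of_norm_derivWithin_le hgdiff
        (fun y hy => by rw [Real.norm_eq_abs]; exact hdg y hy) hx₂ hx₁
      rwa [Real.norm_eq_abs, Real.norm_eq_abs] at h
    rcases eq_or_ne x₁ x₂ with rfl | hne
    · simp [Real.zero_rpow hθ₀.ne']
    · have hpos : 0 < |x₁ - x₂| := abs_pos.2 (sub_ne_zero.2 hne)
      have hsplit : |x₁ - x₂| = |x₁ - x₂| ^ (1 - θ) * |x₁ - x₂| ^ θ := by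
        rw [← Real.rpow_add hpos, sub_add_cancel, Real.rpow_one]
      have hle : |x₁ - x₂| ^ (1 - θ) ≤ (b - a) ^ (1 - θ) :=
        Real.rpow_le_rpow (abs_nonneg _) (habs x₁ hx₁ x₂ hx₂) (by linarith)
      calc |iteratedDerivWithin (j + 1) v s x₁ - iteratedDerivWithin (j + 1) v s x₂|
          ≤ (Mv + MF) * |x₁ - x₂| := hlip
        _ = (Mv + MF) * (|x₁ - x₂| ^ (1 - θ) * |x₁ - x₂| ^ θ) := by rw [← hsplit]
        _ ≤ (Mv + MF) * ((b - a) ^ (1 - θ) * |x₁ - x₂| ^ θ) := by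
            refine mul_le_mul_of_nonneg_left ?_ (by positivity)
            exact mul_le_mul_of_nonneg_right hle (Real.rpow_nonneg (abs_nonneg _) θ)
        _ = (Mv + MF) * (b - a) ^ (1 - θ) * |x₁ - x₂| ^ θ := by ring
end

section
/- Let c > 0 and h > 0, and consider the peakon profiles u(x) = c·exp(−|x − c·h|) and u₀(x) = c·exp(−|x|). Then sup { |u′(x) − u₀′(x)| : x ∈ (0, c·h) } > c, where u′ and u₀′ denote the derivatives, which exist at every x ∈ (0, c·h). Consequently sup_{x} |u′(x) − u₀′(x)| > c. -/
open MeasureTheory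


lemma deriv_left (c a x : ℝ) (hx : x < a) :
    HasDerivAt (fun x => c * Real.exp (-|x - a|)) (c * Real.exp (x - a)) x := by
  have h2 : HasDerivAt (fun x => c * Real.exp (x - a)) (c * Real.exp (x - a)) x := by
    have := ((Real.hasDerivAt_exp (x - a)).comp x ((hasDerivAt_id x).sub_const a)).const_mul c
    simpa using this
  refine h2.congr_of_eventuallyEq ?_
  filter_upwards [Iio_mem_nhds hx] with y hy
  rw [abs_of_neg (by simpa using sub_neg.mpr (Set.mem_Iio.mp hy)), neg_neg]

lemma deriv_right (c a x : ℝ) (hx : a < x) :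
    HasDerivAt (fun x => c * Real.exp (-|x - a|)) (-(c * Real.exp (a - x))) x := by
  have h2 : HasDerivAt (fun x => c * Real.exp (a - x)) (-(c * Real.exp (a - x))) x := by
    have := ((Real.hasDerivAt_exp (a - x)).comp x ((hasDerivAt_id x).const_sub a)).const_mul c
    simpa using this
  refine h2.congr_of_eventuallyEq ?_
  filter_upwards [Ioi_mem_nhds hx] with y hy
  rw [abs_of_pos (by simpa using sub_pos.mpr (Set.mem_Ioi.mp hy))]
  ring_nf

lemma not_diff_peak (c a : ℝ) (hc : 0 < c) :
    ¬ DifferentiableAt ℝ (fun x => c * Real.exp (-|x - a|)) a := by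
  intro H
  have h1 : DifferentiableAt ℝ (fun x => Real.log (c * Real.exp (-|x - a|))) a :=
    H.log (by positivity)
  have h2 : (fun x => Real.log (c * Real.exp (-|x - a|)))
      = fun x => Real.log c + (-|x - a|) := by
    funext x; rw [Real.log_mul (ne_of_gt hc) (Real.exp_ne_zero _), Real.log_exp]
  rw [h2] at h1
  have h3 : DifferentiableAt ℝ (fun x => |x - a|) a := by
    have := (h1.sub_const (Real.log c)).neg
    simpa using this
  have h4 : DifferentiableAt ℝ (fun y : ℝ => |y|) 0 := by
    have h5 : DifferentiableAt ℝ (fun x => |x - a|) (id (0:ℝ) + a) := by simpa using h3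
    have := h5.comp (0 : ℝ) ((differentiableAt_id (𝕜 := ℝ) (x := (0:ℝ))).add_const a)
    have h6 : ((fun x => |x - a|) ∘ fun y : ℝ => y + a) = fun y : ℝ => |y| := by
      funext y; simp [Function.comp]
    rw [← h6]; exact this
  exact not_differentiableAt_abs_zero h4

/-- For the peakon profiles `u(x) = c·exp(−|x − c·h|)` and
`u₀(x) = c·exp(−|x|)` (with `c, h > 0`), both are differentiable at every
`x ∈ (0, c·h)`, the sup of `|u' − u₀'|` over `(0, c·h)` exceeds `c`, and hence
the global sup of `|u' − u₀'|` exceeds `c`. -/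
theorem stmt_17 (c h : ℝ) (hc : 0 < c) (hh : 0 < h)
    (u u₀ : ℝ → ℝ)
    (hu : ∀ x, u x = c * Real.exp (-|x - c * h|))
    (hu₀ : ∀ x, u₀ x = c * Real.exp (-|x|)) :
    (∀ x ∈ Set.Ioo (0 : ℝ) (c * h),
      DifferentiableAt ℝ u x ∧ DifferentiableAt ℝ u₀ x) ∧
    c < sSup ((fun x => |deriv u x - deriv u₀ x|) '' Set.Ioo (0 : ℝ) (c * h)) ∧
    c < ⨆ x : ℝ, |deriv u x - deriv u₀ x| := by
  have hu' : u = fun x => c * Real.exp (-|x - c * h|) := funext hu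
  have hu₀' : u₀ = fun x => c * Real.exp (-|x - 0|) := by
    funext x; rw [hu₀, sub_zero]
  have hch : 0 < c * h := mul_pos hc hh
  -- derivative formulas
  have hdu : ∀ x, x < c * h → deriv u x = c * Real.exp (x - c * h) := by
    intro x hx; rw [hu']; exact (deriv_left c (c * h) x hx).deriv
  have hdu₀ : ∀ x, 0 < x → deriv u₀ x = -(c * Real.exp (0 - x)) := by
    intro x hx; rw [hu₀']; exact (deriv_right c 0 x hx).deriv
  -- bound on derivatives
  have hb : ∀ (a x : ℝ), |deriv (fun x => c * Real.exp (-|x - a|)) x| ≤ c := by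
    intro a x
    rcases lt_trichotomy x a with hx | hx | hx
    · rw [(deriv_left c a x hx).deriv, abs_of_nonneg (by positivity)]
      calc c * Real.exp (x - a) ≤ c * 1 := by
            have := Real.exp_le_one_iff.mpr (by linarith : x - a ≤ (0:ℝ))
            nlinarith
        _ = c := mul_one c
    · rw [hx, deriv_zero_of_not_differentiableAt (not_diff_peak c a hc), abs_zero]
      exact hc.le
    · rw [(deriv_right c a x hx).deriv, abs_neg, abs_of_nonneg (by positivity)]
      calc c * Real.exp (a - x) ≤ c * 1 := by
            have := Real.exp_le_one_iff.mpr (by linarith : a - x ≤ (0:ℝ))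
            nlinarith
        _ = c := mul_one c
  have hbdd : ∀ x, |deriv u x - deriv u₀ x| ≤ 2 * c := by
    intro x
    have h1 := hb (c * h) x
    have h2 := hb 0 x
    rw [← hu'] at h1; rw [← hu₀'] at h2
    calc |deriv u x - deriv u₀ x| ≤ |deriv u x| + |deriv u₀ x| := abs_sub _ _
      _ ≤ 2 * c := by linarith
  have hrange : BddAbove (Set.range fun x => |deriv u x - deriv u₀ x|) := by
    refine ⟨2 * c, ?_⟩
    rintro y ⟨x, rfl⟩
    exact hbdd x
  -- the witness point
  set x₀ : ℝ := min (c * h) (Real.exp (-(c * h))) / 2 with hx₀def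
  have hx₀pos : 0 < x₀ := by positivity
  have hx₀lt : x₀ < c * h := by
    have : min (c * h) (Real.exp (-(c * h))) ≤ c * h := min_le_left _ _
    have h2 : (0:ℝ) < min (c * h) (Real.exp (-(c * h))) := by positivity
    rw [hx₀def]; linarith
  have hx₀exp : x₀ < Real.exp (-(c * h)) := by
    have : min (c * h) (Real.exp (-(c * h))) ≤ Real.exp (-(c * h)) := min_le_right _ _
    have h2 : (0:ℝ) < min (c * h) (Real.exp (-(c * h))) := by positivity
    rw [hx₀def]; linarith
  -- value at x₀
  have hval : c < |deriv u x₀ - deriv u₀ x₀| := by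
    rw [hdu x₀ hx₀lt, hdu₀ x₀ hx₀pos, sub_neg_eq_add,
      abs_of_nonneg (by positivity)]
    have e1 : 1 - x₀ ≤ Real.exp (-x₀) := by
      have := Real.add_one_le_exp (-x₀); linarith
    have e2 : Real.exp (-(c * h)) < Real.exp (x₀ - c * h) :=
      Real.exp_lt_exp.mpr (by linarith)
    have e3 : Real.exp (0 - x₀) = Real.exp (-x₀) := by ring_nf
    rw [e3]
    nlinarith
  refine ⟨?_, ?_, ?_⟩
  · intro x hx
    constructor
    · rw [hu']; exact (deriv_left c (c * h) x hx.2).differentiableAt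
    · rw [hu₀']; exact (deriv_right c 0 x hx.1).differentiableAt
  · refine lt_of_lt_of_le hval (le_csSup ?_ ?_)
    · exact hrange.mono (Set.image_subset_range _ _)
    · exact Set.mem_image_of_mem _ ⟨hx₀pos, hx₀lt⟩
  · exact lt_of_lt_of_le hval (le_ciSup hrange x₀)
end

section
/- Let c₁ > c₂ > 0 and h > 0, and consider the peakon profiles u₁(x) = c₁·exp(−|x − c₁·h|) and u₂(x) = c₂·exp(−|x − c₂·h|). Then sup { |u₁′(x) − u₂′(x)| : x ∈ (c₂·h, c₁·h) } > c₁, where u₁′ and u₂′ denote the derivatives, which exist at every x ∈ (c₂·h, c₁·h). -/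
open MeasureTheory

/-- For the peakon profiles `u₁(x) = c₁·exp(−|x − c₁·h|)` and
`u₂(x) = c₂·exp(−|x − c₂·h|)` with `c₁ > c₂ > 0` and `h > 0`, both are differentiable
at every `x ∈ (c₂·h, c₁·h)` and the sup of `|u₁' − u₂'|` over that interval
exceeds `c₁`. -/
theorem stmt_18 (c₁ c₂ h : ℝ) (hc₂ : 0 < c₂) (hc : c₂ < c₁) (hh : 0 < h)
    (u₁ u₂ : ℝ → ℝ)
    (hu₁ : ∀ x, u₁ x = c₁ * Real.exp (-|x - c₁ * h|))
    (hu₂ : ∀ x, u₂ x = c₂ * Real.exp (-|x - c₂ * h|)) :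
    (∀ x ∈ Set.Ioo (c₂ * h) (c₁ * h),
      DifferentiableAt ℝ u₁ x ∧ DifferentiableAt ℝ u₂ x) ∧
    c₁ < sSup ((fun x => |deriv u₁ x - deriv u₂ x|) '' Set.Ioo (c₂ * h) (c₁ * h)) := by
  set a := c₁ * h with ha
  set b := c₂ * h with hb
  have hc₁ : 0 < c₁ := hc₂.trans hc
  have hba : b < a := by
    exact mul_lt_mul_of_pos_right hc hh
  -- derivative facts
  have hd₁ : ∀ x ∈ Set.Ioo b a, HasDerivAt u₁ (c₁ * Real.exp (x - a)) x := by
    intro x hx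
    have heq : u₁ =ᶠ[nhds x] fun y => c₁ * Real.exp (y - a) := by
      filter_upwards [isOpen_Iio.mem_nhds hx.2] with y hy
      rw [hu₁ y]
      have : |y - a| = -(y - a) := abs_of_neg (sub_neg.mpr hy)
      rw [this, neg_neg]
    have : HasDerivAt (fun y => c₁ * Real.exp (y - a)) (c₁ * (Real.exp (x - a) * 1)) x := by
      exact (((hasDerivAt_id x).sub_const a).exp).const_mul c₁
    simpa using this.congr_of_eventuallyEq heq
  have hd₂ : ∀ x ∈ Set.Ioo b a, HasDerivAt u₂ (-(c₂ * Real.exp (b - x))) x := by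
    intro x hx
    have heq : u₂ =ᶠ[nhds x] fun y => c₂ * Real.exp (b - y) := by
      filter_upwards [isOpen_Ioi.mem_nhds hx.1] with y hy
      rw [hu₂ y]
      have : |y - b| = y - b := abs_of_pos (sub_pos.mpr hy)
      rw [this]
      ring_nf
    have : HasDerivAt (fun y => c₂ * Real.exp (b - y)) (c₂ * (Real.exp (b - x) * (0 - 1))) x := by
      exact (((hasDerivAt_const x b).sub (hasDerivAt_id x)).exp).const_mul c₂
    have h2 := this.congr_of_eventuallyEq heq
    rw [show -(c₂ * Real.exp (b - x)) = c₂ * (Real.exp (b - x) * (0 - 1)) by ring]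
    exact h2
  refine ⟨fun x hx => ⟨(hd₁ x hx).differentiableAt, (hd₂ x hx).differentiableAt⟩, ?_⟩
  -- the value of |u₁' - u₂'| on the interval
  have hval : ∀ x ∈ Set.Ioo b a,
      |deriv u₁ x - deriv u₂ x| = c₁ * Real.exp (x - a) + c₂ * Real.exp (b - x) := by
    intro x hx
    rw [(hd₁ x hx).deriv, (hd₂ x hx).deriv, sub_neg_eq_add]
    exact abs_of_pos (by positivity)
  -- bounded above
  have hbdd : BddAbove ((fun x => |deriv u₁ x - deriv u₂ x|) '' Set.Ioo b a) := by
    refine ⟨c₁ + c₂, ?_⟩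
    rintro v ⟨x, hx, rfl⟩
    show |deriv u₁ x - deriv u₂ x| ≤ c₁ + c₂
    rw [hval x hx]
    have h1 : Real.exp (x - a) ≤ 1 := Real.exp_le_one_iff.mpr (by linarith [hx.2])
    have h2 : Real.exp (b - x) ≤ 1 := Real.exp_le_one_iff.mpr (by linarith [hx.1])
    nlinarith
  -- witness point
  set δ := c₂ * Real.exp (b - a) with hδ
  have hδpos : 0 < δ := by positivity
  set ε := min ((a - b) / 2) (δ / (2 * c₁)) with hε
  have hεpos : 0 < ε := lt_min (by linarith) (by positivity)
  set x₀ := a - ε with hx₀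
  have hx₀mem : x₀ ∈ Set.Ioo b a := by
    constructor
    · have : ε ≤ (a - b) / 2 := min_le_left _ _
      simp only [hx₀]; linarith
    · simp only [hx₀]; linarith
  have key : c₁ < |deriv u₁ x₀ - deriv u₂ x₀| := by
    rw [hval x₀ hx₀mem]
    have h1 : 1 - ε ≤ Real.exp (-ε) := by
      have := Real.add_one_le_exp (-ε); linarith
    have h2 : Real.exp (b - a) ≤ Real.exp (b - x₀) := by
      apply Real.exp_le_exp.mpr
      simp only [hx₀]; linarith
    have hεle : ε ≤ δ / (2 * c₁) := min_le_right _ _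
    have h3 : c₁ * ε ≤ δ / 2 := by
      have h4 := (le_div_iff₀ (by positivity : (0:ℝ) < 2 * c₁)).mp hεle
      nlinarith
    have hx0a : x₀ - a = -ε := by simp [hx₀]
    rw [hx0a]
    nlinarith [mul_le_mul_of_nonneg_left h1 hc₁.le, mul_le_mul_of_nonneg_left h2 hc₂.le]
  calc c₁ < |deriv u₁ x₀ - deriv u₂ x₀| := key
    _ ≤ _ := le_csSup hbdd ⟨x₀, hx₀mem, rfl⟩
end
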